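/- Let n ≥ 1 be an integer, let g = 2n, let Q be the product of the distinct primes dividing 2n, and let q̄ be the largest prime factor of 2n. Then the total number of driving terms for the gap g in the cycle of gaps of q̄# is T_g(q̄#) = φ(Q) · ∏_{p prime, p ≤ q̄, p ∤ Q} (p − 2), where φ is Euler's totient function. In particular T_g(q̄#) > 0, so the gap g has driving terms at the stage q̄ of Eratosthenes sieve. -/

import Mathlib

open Finset

/-- `totalDT N g` is the total number of driving terms for the gap `g` of all lengths
in the cycle of gaps of `N`. -/
def totalDT (N g : ℕ) : ℕ :=
  ((Finset.Icc 1 N).filter (fun a => Nat.gcd a N = 1 ∧ Nat.gcd (a + g) N = 1)).card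

noncomputable def cnt (N g : ℕ) : ℕ :=
  Nat.card {a : ZMod N // IsUnit a ∧ IsUnit (a + (g : ZMod N))}

lemma totalDT_eq_cnt (N g : ℕ) (hN : 0 < N) : totalDT N g = cnt N g := by
  classical
  haveI : NeZero N := ⟨hN.ne'⟩
  rw [totalDT, cnt, Nat.card_eq_fintype_card, Fintype.card_subtype]
  refine Finset.card_bij (fun a _ => (a : ZMod N)) ?_ ?_ ?_
  · intro a ha
    simp only [mem_filter, mem_Icc] at ha
    obtain ⟨_, h1, h2⟩ := ha
    simp only [mem_filter, mem_univ, true_and]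
    constructor
    · exact (ZMod.isUnit_iff_coprime a N).2 h1
    · have : ((a + g : ℕ) : ZMod N) = (a : ZMod N) + g := by push_cast; ring
      rw [← this]
      exact (ZMod.isUnit_iff_coprime (a + g) N).2 h2
  · intro a ha b hb hab
    simp only [mem_filter, mem_Icc] at ha hb
    have h : a % N = b % N := (ZMod.natCast_eq_natCast_iff a b N).1 hab
    have ha2 : a % N = a ∨ a = N := by
      rcases lt_or_eq_of_le ha.1.2 with h' | h'
      · exact Or.inl (Nat.mod_eq_of_lt h')
      · exact Or.inr h'
    have hb2 : b % N = b ∨ b = N := by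
      rcases lt_or_eq_of_le hb.1.2 with h' | h'
      · exact Or.inl (Nat.mod_eq_of_lt h')
      · exact Or.inr h'
    have hNN : N % N = 0 := Nat.mod_self N
    have h1a := ha.1.1
    have h1b := hb.1.1
    rcases ha2 with h3 | h3 <;> rcases hb2 with h4 | h4 <;> subst_vars <;> omega
  · intro x hx
    simp only [mem_filter, mem_univ, true_and] at hx
    set a := if x.val = 0 then N else x.val with ha_def
    have hcast : (a : ZMod N) = x := by
      rw [ha_def]
      split_ifs with h0
      · rw [ZMod.natCast_self]
        exact ((ZMod.val_eq_zero x).1 h0).symm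
      · exact ZMod.natCast_zmod_val x
    have hmem : a ∈ Finset.Icc 1 N := by
      have hlt := ZMod.val_lt x
      rw [mem_Icc, ha_def]
      split_ifs with h0 <;> omega
    refine ⟨a, ?_, hcast⟩
    rw [mem_filter]
    refine ⟨hmem, ?_, ?_⟩
    · exact (ZMod.isUnit_iff_coprime a N).1 (by rw [hcast]; exact hx.1)
    · refine (ZMod.isUnit_iff_coprime (a + g) N).1 ?_
      have : ((a + g : ℕ) : ZMod N) = x + g := by push_cast; rw [hcast]
      rw [this]; exact hx.2

lemma isUnit_prod_iff {M N : Type*} [Monoid M] [Monoid N] {x : M × N} :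
    IsUnit x ↔ IsUnit x.1 ∧ IsUnit x.2 := by
  constructor
  · intro h
    exact ⟨h.map (MonoidHom.fst M N), h.map (MonoidHom.snd M N)⟩
  · rintro ⟨⟨u, hu⟩, ⟨v, hv⟩⟩
    exact ⟨⟨(↑u, ↑v), (↑u⁻¹, ↑v⁻¹), by simp [Prod.ext_iff], by simp [Prod.ext_iff]⟩,
      Prod.ext hu hv⟩

lemma ringEquiv_isUnit_iff {R S : Type*} [Ring R] [Ring S] (e : R ≃+* S) (a : R) :
    IsUnit (e a) ↔ IsUnit a := by
  constructor
  · intro h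
    have := h.map e.symm.toRingHom
    simpa using this
  · intro h
    exact h.map e.toRingHom

lemma cnt_mul {m n : ℕ} (h : Nat.Coprime m n) (g : ℕ) :
    cnt (m * n) g = cnt m g * cnt n g := by
  rw [cnt, cnt, cnt, ← Nat.card_prod]
  apply Nat.card_congr
  refine (Equiv.subtypeEquiv (ZMod.chineseRemainder h).toEquiv ?_).trans
    (Equiv.subtypeProdEquivProd)
  intro a
  set e := ZMod.chineseRemainder h
  have hg : e ((g : ZMod (m * n))) = ((g : ZMod m), (g : ZMod n)) := by
    have := map_natCast (e : ZMod (m*n) →+* ZMod m × ZMod n) g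
    simpa [Prod.ext_iff] using this
  rw [← ringEquiv_isUnit_iff e a, ← ringEquiv_isUnit_iff e (a + (g : ZMod (m*n))),
    map_add, hg, isUnit_prod_iff, isUnit_prod_iff, Prod.fst_add, Prod.snd_add]
  tauto

lemma cnt_one (g : ℕ) : cnt 1 g = 1 := by
  rw [cnt, Nat.card_eq_fintype_card]
  have : Subsingleton {a : ZMod 1 // IsUnit a ∧ IsUnit (a + (g : ZMod 1))} :=
    ⟨fun a b => Subtype.ext (Subsingleton.elim _ _)⟩
  refine Fintype.card_eq_one_iff.2 ⟨⟨0, isUnit_of_subsingleton _, isUnit_of_subsingleton _⟩,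
    fun y => Subtype.ext (Subsingleton.elim _ _)⟩

lemma cnt_prime {p : ℕ} (hp : p.Prime) (g : ℕ) :
    cnt p g = if p ∣ g then p - 1 else p - 2 := by
  classical
  haveI : Fact p.Prime := ⟨hp⟩
  rw [cnt, Nat.card_eq_fintype_card, Fintype.card_subtype]
  have hfe : (univ.filter (fun a : ZMod p => IsUnit a ∧ IsUnit (a + (g : ZMod p))))
      = univ \ {0, -(g : ZMod p)} := by
    ext a
    simp only [mem_filter, mem_univ, true_and, mem_sdiff, mem_insert, mem_singleton,
      isUnit_iff_ne_zero]
    constructor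
    · rintro ⟨h1, h2⟩
      push_neg
      exact ⟨h1, fun h => h2 (by rw [h]; ring)⟩
    · intro h
      push_neg at h
      exact ⟨h.1, fun hh => h.2 (by linear_combination hh)⟩
  rw [hfe, card_sdiff_of_subset (subset_univ _), card_univ, ZMod.card]
  by_cases hdvd : p ∣ g
  · have hg0 : (g : ZMod p) = 0 := (ZMod.natCast_eq_zero_iff g p).2 hdvd
    rw [if_pos hdvd, hg0]
    simp
  · have hg0 : (g : ZMod p) ≠ 0 := fun h => hdvd ((ZMod.natCast_eq_zero_iff g p).1 h)
    rw [if_neg hdvd]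
    rw [card_insert_of_notMem (by simp [hg0]), card_singleton]

lemma cnt_prod (g : ℕ) (S : Finset ℕ) (hS : ∀ p ∈ S, p.Prime) :
    cnt (∏ p ∈ S, p) g = ∏ p ∈ S, cnt p g := by
  classical
  induction S using Finset.induction_on with
  | empty => simpa using cnt_one g
  | insert a s hx ih =>
    rw [Finset.prod_insert hx, Finset.prod_insert hx]
    have ha := hS a (mem_insert_self a s)
    have hcop : Nat.Coprime a (∏ p ∈ s, p) := by
      apply Nat.Coprime.prod_right
      intro q hq
      exact (Nat.coprime_primes ha (hS q (mem_insert_of_mem hq))).2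
        (fun h => hx (h ▸ hq))
    rw [cnt_mul hcop, ih (fun p hp => hS p (mem_insert_of_mem hp))]

lemma totient_prod_primes (S : Finset ℕ) (hS : ∀ p ∈ S, p.Prime) :
    Nat.totient (∏ p ∈ S, p) = ∏ p ∈ S, (p - 1) := by
  classical
  induction S using Finset.induction_on with
  | empty => simp
  | insert a s hx ih =>
    rw [Finset.prod_insert hx, Finset.prod_insert hx]
    have ha := hS a (mem_insert_self a s)
    have hcop : Nat.Coprime a (∏ p ∈ s, p) := by
      apply Nat.Coprime.prod_right
      intro q hq
      exact (Nat.coprime_primes ha (hS q (mem_insert_of_mem hq))).2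
        (fun h => hx (h ▸ hq))
    rw [Nat.totient_mul hcop, Nat.totient_prime ha,
      ih (fun p hp => hS p (mem_insert_of_mem hp))]

theorem stmt_7 (n Q qbar : ℕ) (hn : 1 ≤ n)
    (hQ : Q = ∏ p ∈ (2 * n).primeFactors, p)
    (hq : qbar.Prime) (hdvd : qbar ∣ 2 * n)
    (hmax : ∀ r : ℕ, r.Prime → r ∣ 2 * n → r ≤ qbar) :
    (totalDT (primorial qbar) (2 * n) =
      Nat.totient Q *
        ∏ p ∈ (Finset.range (qbar + 1)).filter (fun p => p.Prime ∧ ¬ p ∣ Q), (p - 2)) ∧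
    0 < totalDT (primorial qbar) (2 * n) := by
  have h2n : 0 < 2 * n := by omega
  set g := 2 * n with hg
  set P := (Finset.range (qbar + 1)).filter Nat.Prime with hP
  have hPprime : ∀ p ∈ P, p.Prime := fun p hp => (mem_filter.1 hp).2
  -- p ∣ Q ↔ p ∣ g for primes p
  have hQdvd : Q ∣ g := hQ ▸ Nat.prod_primeFactors_dvd g
  have hiff : ∀ p : ℕ, p.Prime → (p ∣ Q ↔ p ∣ g) := by
    intro p hp
    constructor
    · exact fun h => h.trans hQdvd
    · intro h
      have : p ∈ g.primeFactors := Nat.mem_primeFactors.2 ⟨hp, h, h2n.ne'⟩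
      exact hQ ▸ Finset.dvd_prod_of_mem _ this
  have hprim : primorial qbar = ∏ p ∈ P, p := rfl
  have hpos : 0 < primorial qbar := by
    rw [hprim]
    exact Finset.prod_pos (fun p hp => (hPprime p hp).pos)
  have hfilter_eq : P.filter (fun p => p ∣ g) = g.primeFactors := by
    ext p
    simp only [hP, mem_filter, mem_range, Nat.mem_primeFactors]
    constructor
    · rintro ⟨⟨_, hp⟩, hd⟩
      exact ⟨hp, hd, h2n.ne'⟩
    · rintro ⟨hp, hd, _⟩
      exact ⟨⟨Nat.lt_succ_of_le (hmax p hp hd), hp⟩, hd⟩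
  have key : totalDT (primorial qbar) g
      = (∏ p ∈ P.filter (fun p => p ∣ g), (p - 1)) *
        (∏ p ∈ P.filter (fun p => ¬ p ∣ g), (p - 2)) := by
    rw [totalDT_eq_cnt _ _ hpos, hprim, cnt_prod g P hPprime]
    rw [← Finset.prod_filter_mul_prod_filter_not P (fun p => p ∣ g)]
    congr 1
    · refine Finset.prod_congr rfl (fun p hp => ?_)
      rw [mem_filter] at hp
      rw [cnt_prime (hPprime p hp.1) g, if_pos hp.2]
    · refine Finset.prod_congr rfl (fun p hp => ?_)
      rw [mem_filter] at hp
      rw [cnt_prime (hPprime p hp.1) g, if_neg hp.2]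
  have hQtot : Nat.totient Q = ∏ p ∈ P.filter (fun p => p ∣ g), (p - 1) := by
    rw [hfilter_eq, hQ, totient_prod_primes _ (fun p hp => Nat.prime_of_mem_primeFactors hp)]
  have hsetr : P.filter (fun p => ¬ p ∣ g)
      = (Finset.range (qbar + 1)).filter (fun p => p.Prime ∧ ¬ p ∣ Q) := by
    rw [hP, Finset.filter_filter]
    refine Finset.filter_congr (fun p _ => ?_)
    constructor
    · rintro ⟨hp, hd⟩
      exact ⟨hp, fun h => hd ((hiff p hp).1 h)⟩
    · rintro ⟨hp, hd⟩
      exact ⟨hp, fun h => hd ((hiff p hp).2 h)⟩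
  constructor
  · rw [key, hQtot, hsetr]
  · rw [key]
    apply Nat.mul_pos
    · refine Finset.prod_pos (fun p hp => ?_)
      have := (hPprime p (Finset.mem_of_mem_filter p hp)).two_le
      omega
    · refine Finset.prod_pos (fun p hp => ?_)
      rw [mem_filter] at hp
      have hp2 := (hPprime p hp.1).two_le
      have : p ≠ 2 := by
        rintro rfl
        exact hp.2 ⟨n, rfl⟩
      omega
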